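/- Suppose G⁻(λ) < ρ. Then for every q ∈ [0, M] the worst-case regret admits the following closed form: if q < λ, then Regret(q) = b·(M − q) + (b+h)·( E_G[(q − D)·1{D ≤ q}] − E_G[(M − D)·1{D < λ}] ); if λ ≤ q ≤ q†_G, then Regret(q) = (b − (b+h)·G⁻(λ))·(M − q); and if q > q†_G, then Regret(q) = h·(q − λ). -/

import Mathlib

open MeasureTheory Set

/-- Newsvendor cost of ordering quantity `q` under demand distribution `F`,
with underage cost `b` and overage cost `h`. -/
noncomputable def nvCost (b h : ℝ) (F : Measure ℝ) (q : ℝ) : ℝ :=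
  ∫ x, (b * max (x - q) 0 + h * max (q - x) 0) ∂F

/-- Optimal newsvendor quantity: the `ρ`-th quantile of `F`. -/
noncomputable def qStar (ρ : ℝ) (F : Measure ℝ) : ℝ :=
  sInf {q : ℝ | ρ ≤ (F (Iic q)).toReal}

/-- The set `𝒢` of admissible demand distributions: Borel probability measures on ℝ
supported on `[0, ∞)` with finite mean and optimal newsvendor quantity at most `M`. -/
def GoodDist (ρ M : ℝ) : Set (Measure ℝ) :=
  {F | IsProbabilityMeasure F ∧ F (Iio 0) = 0 ∧ Integrable id F ∧ qStar ρ F ≤ M}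

/-- The ambiguity set `𝒜_λ`: all admissible distributions agreeing with `G` before `lam`. -/
def Ambig (ρ M : ℝ) (G : Measure ℝ) (lam : ℝ) : Set (Measure ℝ) :=
  {F | F ∈ GoodDist ρ M ∧ ∀ x < lam, F (Iic x) = G (Iic x)}

/-- Worst-case regret of an ordering quantity `q` over the ambiguity set. -/
noncomputable def Regret (b h ρ M : ℝ) (G : Measure ℝ) (lam q : ℝ) : ℝ :=
  sSup ((fun F => nvCost b h F q - nvCost b h F (qStar ρ F)) '' Ambig ρ M G lam)

/-- Minimax risk `Δ`. -/
noncomputable def Risk (b h ρ M : ℝ) (G : Measure ℝ) (lam : ℝ) : ℝ :=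
  sInf (Regret b h ρ M G lam '' Icc 0 M)

/-- The unidentifiable ordering quantity `q†_G`. -/
noncomputable def qDagger (b h M : ℝ) (G : Measure ℝ) (lam : ℝ) : ℝ :=
  (b * M + h * lam - (b + h) * (G (Iio lam)).toReal * M) /
    ((b + h) * (1 - (G (Iio lam)).toReal))

/-- The two-point-tail distribution `F_p`: agrees with `G` on `[0, λ)`, places an atom
of mass `p` at `λ` and an atom of mass `1 - p - G⁻(λ)` at `M`. -/
noncomputable def Fp (G : Measure ℝ) (lam M p : ℝ) : Measure ℝ :=
  G.restrict (Iio lam) + ENNReal.ofReal p • Measure.dirac lam +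
    ENNReal.ofReal (1 - p - (G (Iio lam)).toReal) • Measure.dirac M

/-- The `N`-fold product (i.i.d.) measure of `G` (equal to `Measure.pi` whenever `G`
is sigma-finite, in particular for probability measures). -/
noncomputable def iidPi (N : ℕ) (G : Measure ℝ) : Measure (Fin N → ℝ) := by
  classical
  exact if h : SigmaFinite G then
    haveI := h
    Measure.pi fun _ => G
  else 0

namespace NV5
open Filter


lemma toReal_mono' (F : Measure ℝ) [IsFiniteMeasure F] {A B : Set ℝ} (hAB : A ⊆ B) :
    (F A).toReal ≤ (F B).toReal :=
  ENNReal.toReal_mono (measure_ne_top F B) (measure_mono hAB)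

lemma cdf_mono (F : Measure ℝ) [IsFiniteMeasure F] :
    Monotone (fun t => (F (Iic t)).toReal) := fun _ _ hst =>
  toReal_mono' F (Iic_subset_Iic.2 hst)

lemma cdf_nonneg (F : Measure ℝ) (t : ℝ) : 0 ≤ (F (Iic t)).toReal := ENNReal.toReal_nonneg

lemma cdf_le_one (F : Measure ℝ) [IsProbabilityMeasure F] (t : ℝ) :
    (F (Iic t)).toReal ≤ 1 := by
  have := toReal_mono' F (subset_univ (Iic t))
  simpa using this

lemma cdf_intOn (F : Measure ℝ) [IsProbabilityMeasure F] (a c : ℝ) :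
    IntegrableOn (fun t => (F (Iic t)).toReal) (Ioc a c) volume := by
  refine Integrable.mono' (integrable_const 1) ((cdf_mono F).measurable.aestronglyMeasurable) ?_
  filter_upwards with t
  rw [Real.norm_eq_abs, abs_of_nonneg (cdf_nonneg F t)]
  exact cdf_le_one F t

lemma intg_max1 (F : Measure ℝ) [IsFiniteMeasure F] (hF : Integrable id F) (q : ℝ) :
    Integrable (fun x => max (x - q) 0) F := by
  have : Integrable (fun x => x - q) F := hF.sub (integrable_const q)
  exact this.pos_part

lemma intg_max2 (F : Measure ℝ) [IsFiniteMeasure F] (hF : Integrable id F) (q : ℝ) :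
    Integrable (fun x => max (q - x) 0) F := by
  have : Integrable (fun x => q - x) F := (integrable_const q).sub hF
  exact this.pos_part

lemma intg_cost (b h : ℝ) (F : Measure ℝ) [IsFiniteMeasure F] (hF : Integrable id F) (q : ℝ) :
    Integrable (fun x => b * max (x - q) 0 + h * max (q - x) 0) F :=
  ((intg_max1 F hF q).const_mul b).add ((intg_max2 F hF q).const_mul h)



lemma step1 {a c : ℝ} (hac : a ≤ c) (x : ℝ) :
    ∫ t in Ioc a c, (Ici x).indicator (fun _ => (1:ℝ)) t = max (c - x) 0 - max (a - x) 0 := by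
  rw [integral_indicator_const (1:ℝ) measurableSet_Ici, measureReal_def,
    Measure.restrict_apply measurableSet_Ici]
  rcases le_or_gt x a with hxa | hax
  · have hset : Ici x ∩ Ioc a c = Ioc a c := by
      apply inter_eq_self_of_subset_right
      intro t ht
      exact le_trans hxa (le_of_lt ht.1)
    have h1 : max (c - x) 0 = c - x := max_eq_left (by linarith)
    have h2 : max (a - x) 0 = a - x := max_eq_left (by linarith)
    rw [hset, Real.volume_Ioc, ENNReal.toReal_ofReal (by linarith), smul_eq_mul, mul_one, h1, h2]
    ring
  · have hset : Ici x ∩ Ioc a c = Icc x c := by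
      ext t
      simp only [mem_inter_iff, mem_Ici, mem_Ioc, mem_Icc]
      constructor
      · rintro ⟨h1, _, h3⟩; exact ⟨h1, h3⟩
      · rintro ⟨h1, h2⟩; exact ⟨h1, lt_of_lt_of_le hax h1, h2⟩
    have h2 : max (a - x) 0 = 0 := max_eq_right (by linarith)
    rw [hset, Real.volume_Icc, smul_eq_mul, mul_one, h2]
    rcases le_or_gt x c with hxc | hcx
    · have h1 : max (c - x) 0 = c - x := max_eq_left (by linarith)
      rw [ENNReal.toReal_ofReal (by linarith), h1]
      ring
    · have h1 : max (c - x) 0 = 0 := max_eq_right (by linarith)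
      rw [ENNReal.ofReal_eq_zero.2 (by linarith), ENNReal.toReal_zero, h1]
      ring

lemma J_diff (F : Measure ℝ) [IsProbabilityMeasure F] {a c : ℝ} (hac : a ≤ c) :
    ∫ x, (max (c - x) 0 - max (a - x) 0) ∂F = ∫ t in Ioc a c, (F (Iic t)).toReal := by
  haveI : IsFiniteMeasure (volume.restrict (Ioc a c)) :=
    ⟨by rw [Measure.restrict_apply_univ]; exact measure_Ioc_lt_top⟩
  have hmeas : MeasurableSet {p : ℝ × ℝ | p.1 ≤ p.2} :=
    measurableSet_le measurable_fst measurable_snd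
  have hint : Integrable (Function.uncurry (fun (x t : ℝ) => (Ici x).indicator (fun _ => (1:ℝ)) t))
      (F.prod (volume.restrict (Ioc a c))) := by
    have heq : Function.uncurry (fun (x t : ℝ) => (Ici x).indicator (fun _ => (1:ℝ)) t)
        = {p : ℝ × ℝ | p.1 ≤ p.2}.indicator (fun _ => (1:ℝ)) := by
      funext p
      by_cases hp : p.1 ≤ p.2
      · rw [Function.uncurry]
        rw [indicator_of_mem (mem_Ici.2 hp), indicator_of_mem (show p ∈ _ from hp)]
      · rw [Function.uncurry]
        rw [indicator_of_notMem (show p.2 ∉ Ici p.1 by simpa using hp),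
          indicator_of_notMem (show p ∉ _ from hp)]
    rw [heq]
    refine Integrable.mono' (integrable_const 1)
      ((stronglyMeasurable_const.indicator hmeas).aestronglyMeasurable) ?_
    filter_upwards with p
    by_cases hp : p ∈ {p : ℝ × ℝ | p.1 ≤ p.2}
    · rw [indicator_of_mem hp]; simp
    · rw [indicator_of_notMem hp]; simp
  calc ∫ x, (max (c - x) 0 - max (a - x) 0) ∂F
      = ∫ x, (∫ t in Ioc a c, (Ici x).indicator (fun _ => (1:ℝ)) t) ∂F := by
        refine integral_congr_ae ?_
        filter_upwards with x
        rw [step1 hac x]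
    _ = ∫ t in Ioc a c, ∫ x, (Ici x).indicator (fun _ => (1:ℝ)) t ∂F :=
        MeasureTheory.integral_integral_swap hint
    _ = ∫ t in Ioc a c, (F (Iic t)).toReal := by
        refine integral_congr_ae (ae_restrict_of_ae ?_)
        filter_upwards with t
        have heq2 : (fun x => (Ici x).indicator (fun _ => (1:ℝ)) t)
            = fun x => (Iic t).indicator (fun _ => (1:ℝ)) x := by
          funext x
          by_cases hx : x ≤ t
          · rw [indicator_of_mem (mem_Ici.2 hx), indicator_of_mem (mem_Iic.2 hx)]
          · rw [indicator_of_notMem (show t ∉ Ici x by simpa using hx),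
              indicator_of_notMem (show x ∉ Iic t by simpa using hx)]
        rw [heq2, integral_indicator_const (1:ℝ) measurableSet_Iic, smul_eq_mul, mul_one, measureReal_def]



-- assume part1/part2 available; restate needed ones as axioms for isolated test? No, just
-- test with sorry placeholders.

lemma nvCost_diff (b h : ℝ) (F : Measure ℝ) [IsProbabilityMeasure F]
    (hF : Integrable id F) {a c : ℝ} (hac : a ≤ c) :
    nvCost b h F c - nvCost b h F a
      = ∫ t in Ioc a c, ((b + h) * (F (Iic t)).toReal - b) := by
  have key : ∀ x : ℝ, (b * max (x - c) 0 + h * max (c - x) 0)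
      - (b * max (x - a) 0 + h * max (a - x) 0)
      = (b + h) * (max (c - x) 0 - max (a - x) 0) - b * (c - a) := by
    intro x
    have e1 : max (x - c) 0 = (x - c) + max (c - x) 0 := by
      rcases le_total x c with hxc | hcx
      · rw [max_eq_right (by linarith), max_eq_left (by linarith)]; ring
      · rw [max_eq_left (by linarith), max_eq_right (by linarith)]; ring
    have e2 : max (x - a) 0 = (x - a) + max (a - x) 0 := by
      rcases le_total x a with hxc | hcx
      · rw [max_eq_right (by linarith), max_eq_left (by linarith)]; ring
      · rw [max_eq_left (by linarith), max_eq_right (by linarith)]; ring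
    rw [e1, e2]; ring
  have hsub : nvCost b h F c - nvCost b h F a
      = ∫ x, ((b * max (x - c) 0 + h * max (c - x) 0)
          - (b * max (x - a) 0 + h * max (a - x) 0)) ∂F := by
    rw [nvCost, nvCost, ← integral_sub (intg_cost b h F hF c) (intg_cost b h F hF a)]
  rw [hsub]
  have : ∫ x, ((b * max (x - c) 0 + h * max (c - x) 0)
          - (b * max (x - a) 0 + h * max (a - x) 0)) ∂F
      = ∫ x, ((b + h) * (max (c - x) 0 - max (a - x) 0) - b * (c - a)) ∂F := by
    refine integral_congr_ae ?_
    filter_upwards with x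
    exact key x
  rw [this]
  have hint1 : Integrable (fun x => max (c - x) 0 - max (a - x) 0) F :=
    (intg_max2 F hF c).sub (intg_max2 F hF a)
  rw [integral_sub (hint1.const_mul (b + h)) (integrable_const _),
    integral_const, integral_const_mul, J_diff F hac]
  have hvol : ((F univ).toReal : ℝ) = 1 := by simp
  rw [measureReal_def, hvol, one_smul]
  have hrhs : ∫ t in Ioc a c, ((b + h) * (F (Iic t)).toReal - b)
      = (∫ t in Ioc a c, (b + h) * (F (Iic t)).toReal) - ∫ t in Ioc a c, (b:ℝ) := by
    exact integral_sub ((cdf_intOn F a c).const_mul (b + h)) (integrableOn_const measure_Ioc_lt_top.ne)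
  rw [hrhs, setIntegral_const, measureReal_def, integral_const_mul, Real.volume_Ioc,
    ENNReal.toReal_ofReal (by linarith), smul_eq_mul]
  ring



lemma S_nonempty (F : Measure ℝ) [IsProbabilityMeasure F] {ρ : ℝ} (hρ : ρ < 1) :
    {t : ℝ | ρ ≤ (F (Iic t)).toReal}.Nonempty := by
  have h1 : Tendsto (fun x => F (Iic x)) atTop (nhds (F univ)) :=
    tendsto_measure_Iic_atTop F
  have h2 : Tendsto (fun x => (F (Iic x)).toReal) atTop (nhds (F univ).toReal) :=
    (ENNReal.tendsto_toReal (measure_ne_top F univ)).comp h1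
  rw [measure_univ, ENNReal.toReal_one] at h2
  have h3 : ∀ᶠ x in atTop, ρ ≤ (F (Iic x)).toReal :=
    h2.eventually (eventually_ge_nhds hρ)
  exact h3.exists

lemma qStar_eq (F : Measure ℝ) [IsProbabilityMeasure F] {ρ c : ℝ}
    (hc : ρ ≤ (F (Iic c)).toReal) (hlt : ∀ t < c, (F (Iic t)).toReal < ρ) :
    qStar ρ F = c := by
  have hS : {t : ℝ | ρ ≤ (F (Iic t)).toReal} = Ici c := by
    ext t
    simp only [mem_setOf_eq, mem_Ici]
    constructor
    · intro ht
      by_contra hct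
      exact absurd ht (not_le.2 (hlt t (not_le.1 hct)))
    · intro hct
      exact le_trans hc (ENNReal.toReal_mono (measure_ne_top F _)
        (measure_mono (Iic_subset_Iic.2 hct)))
  rw [qStar, hS, csInf_Ici]

lemma qStar_ge (F : Measure ℝ) [IsProbabilityMeasure F] {ρ c : ℝ} (hρ : ρ < 1)
    (hlt : ∀ t < c, (F (Iic t)).toReal < ρ) :
    c ≤ qStar ρ F := by
  refine le_csInf (S_nonempty F hρ) ?_
  intro t ht
  by_contra hct
  exact absurd ht (not_le.2 (hlt t (not_le.1 hct)))

lemma exists_lt_of_qStar_lt (F : Measure ℝ) [IsProbabilityMeasure F] {ρ c : ℝ}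
    (hρ0 : 0 < ρ) (hρ1 : ρ < 1) (hF0 : F (Iio 0) = 0) (hqc : qStar ρ F < c) :
    ∃ s < c, ρ ≤ (F (Iic s)).toReal := by
  have hbdd : BddBelow {t : ℝ | ρ ≤ (F (Iic t)).toReal} := by
    refine ⟨0, fun t ht => ?_⟩
    by_contra h0
    push_neg at h0
    have : F (Iic t) ≤ F (Iio 0) := measure_mono (fun x hx => lt_of_le_of_lt hx h0)
    rw [hF0] at this
    have h2 : (F (Iic t)).toReal = 0 := by
      rw [le_antisymm this zero_le]; simp
    have ht' : ρ ≤ (F (Iic t)).toReal := ht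
    rw [h2] at ht'
    linarith
  obtain ⟨s, hs1, hs2⟩ := (csInf_lt_iff hbdd (S_nonempty F hρ1)).1 hqc
  exact ⟨s, hs2, hs1⟩



lemma Iio_eq_iUnion {lam : ℝ} (hlam : 0 < lam) :
    Iio lam = ⋃ n : ℕ, Iic (lam - lam / (n + 1)) := by
  ext x
  simp only [mem_Iio, mem_iUnion, mem_Iic]
  constructor
  · intro hx
    obtain ⟨n, hn⟩ := exists_nat_one_div_lt (show 0 < (lam - x) / lam from div_pos (by linarith) hlam)
    refine ⟨n, ?_⟩
    have h2 : lam / (n + 1) < lam - x := by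
      have h3 := mul_lt_mul_of_pos_left hn hlam
      have e1 : lam * (1 / ((n : ℝ) + 1)) = lam / ((n : ℝ) + 1) := by ring
      have e2 : lam * ((lam - x) / lam) = lam - x := by field_simp
      rw [e1, e2] at h3
      exact h3
    linarith
  · intro ⟨n, hn⟩
    have : 0 < lam / (n + 1) := div_pos hlam (by positivity)
    linarith

lemma agree_Iio (F G : Measure ℝ) {lam : ℝ} (hlam : 0 ≤ lam)
    (hF0 : F (Iio 0) = 0) (hG0 : G (Iio 0) = 0)
    (hag : ∀ x < lam, F (Iic x) = G (Iic x)) :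
    F (Iio lam) = G (Iio lam) := by
  rcases eq_or_lt_of_le hlam with rfl | hpos
  · rw [hF0, hG0]
  · have hdir : Directed (fun x1 x2 : Set ℝ => x1 ⊆ x2) (fun n : ℕ => Iic (lam - lam / (n + 1))) := by
      apply Monotone.directed_le
      intro m n hmn
      apply Iic_subset_Iic.2
      have : lam / ((n : ℝ) + 1) ≤ lam / ((m : ℝ) + 1) := by
        apply div_le_div_of_nonneg_left hpos.le (by positivity)
        exact_mod_cast by exact_mod_cast add_le_add_left (Nat.cast_le.2 hmn) 1
      linarith
    rw [Iio_eq_iUnion hpos, Directed.measure_iUnion hdir, Directed.measure_iUnion hdir]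
    congr 1
    funext n
    apply hag
    have : 0 < lam / ((n : ℝ) + 1) := div_pos hpos (by positivity)
    linarith



variable {G : Measure ℝ} {lam M p : ℝ}

lemma Fp_apply [IsFiniteMeasure G] {s : Set ℝ} (hs : MeasurableSet s) :
    Fp G lam M p s = G (s ∩ Iio lam) + ENNReal.ofReal p * s.indicator 1 lam
      + ENNReal.ofReal (1 - p - (G (Iio lam)).toReal) * s.indicator 1 M := by
  simp [Fp, Measure.add_apply, Measure.smul_apply, smul_eq_mul,
    Measure.restrict_apply hs, Measure.dirac_apply' _ hs]

lemma Fp_mass [IsProbabilityMeasure G] (hp : 0 ≤ p)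
    (hpr : p + (G (Iio lam)).toReal ≤ 1) :
    G (Iio lam) + ENNReal.ofReal p + ENNReal.ofReal (1 - p - (G (Iio lam)).toReal) = 1 := by
  set r := (G (Iio lam)).toReal with hr
  have h1 : ENNReal.ofReal p + ENNReal.ofReal (1 - p - r) = ENNReal.ofReal (1 - r) := by
    rw [← ENNReal.ofReal_add hp (by linarith)]
    ring_nf
  have h2 : G (Iio lam) = ENNReal.ofReal r :=
    (ENNReal.ofReal_toReal (measure_ne_top G _)).symm
  have hr0 : 0 ≤ r := ENNReal.toReal_nonneg
  rw [add_assoc, h1, h2, ← ENNReal.ofReal_add hr0 (by linarith)]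
  norm_num

lemma Fp_isProb [IsProbabilityMeasure G] (hp : 0 ≤ p)
    (hpr : p + (G (Iio lam)).toReal ≤ 1) :
    IsProbabilityMeasure (Fp G lam M p) := by
  constructor
  rw [Fp_apply MeasurableSet.univ]
  simp only [univ_inter, indicator_of_mem (mem_univ _), Pi.one_apply, mul_one]
  exact Fp_mass hp hpr

lemma Fp_Iio_zero [IsFiniteMeasure G] (hG0 : G (Iio 0) = 0) (hlam : 0 ≤ lam) (hM : 0 < M) :
    Fp G lam M p (Iio 0) = 0 := by
  rw [Fp_apply measurableSet_Iio]
  have h1 : G (Iio 0 ∩ Iio lam) = 0 :=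
    le_antisymm (le_trans (measure_mono inter_subset_left) hG0.le) zero_le
  rw [h1, indicator_of_notMem (by simpa using hlam), indicator_of_notMem (by simpa using hM.le)]
  simp

lemma Fp_integrable [IsFiniteMeasure G] (hG : Integrable id G) :
    Integrable id (Fp G lam M p) := by
  have hd : ∀ a : ℝ, Integrable id (Measure.dirac a) := by
    intro a
    refine (integrable_const a).congr ?_
    rw [MeasureTheory.ae_dirac_eq]
    exact Filter.eventually_pure.2 rfl
  exact ((hG.restrict).add_measure ((hd lam).smul_measure ENNReal.ofReal_ne_top)).add_measure
    ((hd M).smul_measure ENNReal.ofReal_ne_top)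

lemma Fp_Iic_lt [IsFiniteMeasure G] (hlamM : lam ≤ M) {t : ℝ} (ht : t < lam) :
    Fp G lam M p (Iic t) = G (Iic t) := by
  rw [Fp_apply measurableSet_Iic]
  have hs : Iic t ∩ Iio lam = Iic t :=
    inter_eq_self_of_subset_left (fun x hx => lt_of_le_of_lt hx ht)
  rw [indicator_of_notMem (by simp; linarith), indicator_of_notMem (by simp; linarith), hs]
  simp

lemma Fp_Iic_mid [IsFiniteMeasure G] {t : ℝ} (ht : lam ≤ t) (htM : t < M) :
    Fp G lam M p (Iic t) = G (Iio lam) + ENNReal.ofReal p := by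
  rw [Fp_apply measurableSet_Iic]
  have hs : Iic t ∩ Iio lam = Iio lam :=
    inter_eq_self_of_subset_right (fun x hx => le_trans (le_of_lt hx) ht)
  rw [indicator_of_mem (by simpa using ht), indicator_of_notMem (by simp; linarith), hs]
  simp

lemma Fp_Iic_ge [IsProbabilityMeasure G] (hp : 0 ≤ p)
    (hpr : p + (G (Iio lam)).toReal ≤ 1) (hlamM : lam ≤ M) {t : ℝ} (ht : M ≤ t) :
    Fp G lam M p (Iic t) = 1 := by
  rw [Fp_apply measurableSet_Iic]
  have hs : Iic t ∩ Iio lam = Iio lam :=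
    inter_eq_self_of_subset_right (fun x hx => le_trans (le_of_lt hx) (le_trans hlamM ht))
  rw [indicator_of_mem (by simp; linarith), indicator_of_mem (by simpa using ht), hs]
  simpa using Fp_mass hp hpr



lemma integrable_dirac'' (f : ℝ → ℝ) (a : ℝ) : Integrable f (Measure.dirac a) := by
  refine (integrable_const (f a)).congr ?_
  rw [MeasureTheory.ae_dirac_eq]
  exact Filter.eventually_pure.2 rfl

variable {G : Measure ℝ} {b h lam M q : ℝ}

/-- nvCost of F₀ := Fp G lam M 0 at a point y. -/
lemma nvCost_F0 [IsProbabilityMeasure G] (hGint : Integrable id G) (y : ℝ) :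
    nvCost b h (Fp G lam M 0) y
      = (∫ x in Iio lam, (b * max (x - y) 0 + h * max (y - x) 0) ∂G)
        + (1 - (G (Iio lam)).toReal) * (b * max (M - y) 0 + h * max (y - M) 0) := by
  have hF0 : Fp G lam M 0 = G.restrict (Iio lam)
      + ENNReal.ofReal (1 - (G (Iio lam)).toReal) • Measure.dirac M := by
    rw [Fp]
    simp
  have hr1 : (G (Iio lam)).toReal ≤ 1 := by
    have := ENNReal.toReal_mono (measure_ne_top G univ) (measure_mono (subset_univ (Iio lam)))
    simpa using this
  rw [nvCost, hF0, integral_add_measure (intg_cost b h (G.restrict (Iio lam)) hGint.restrict y)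
    ((integrable_dirac'' _ M).smul_measure ENNReal.ofReal_ne_top),
    integral_smul_measure, integral_dirac, ENNReal.toReal_ofReal (by linarith), smul_eq_mul]

lemma F0_value [IsProbabilityMeasure G] (hGint : Integrable id G)
    (hb : 0 < b) (hh : 0 < h)
    (hqlam : q < lam) (hlamM : lam ≤ M) (hqM : q ≤ M) :
    nvCost b h (Fp G lam M 0) q - nvCost b h (Fp G lam M 0) M
      = b * (M - q) + (b + h) *
          ((∫ x in Iic q, (q - x) ∂G) - ∫ x in Iio lam, (M - x) ∂G) := by
  have hsplit : Iic q ∪ Ioo q lam = Iio lam := by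
    ext x
    simp only [mem_union, mem_Iic, mem_Ioo, mem_Iio]
    constructor
    · rintro (hx | ⟨_, hx⟩)
      · linarith
      · exact hx
    · intro hx
      rcases le_or_gt x q with hxq | hqx
      · exact Or.inl hxq
      · exact Or.inr ⟨hqx, hx⟩
  have hdisj : Disjoint (Iic q) (Ioo q lam) := by
    rw [Set.disjoint_left]
    intro x hx hx'
    exact absurd hx'.1 (not_lt.2 hx)
  have hm : (G (Iic q)).toReal + (G (Ioo q lam)).toReal = (G (Iio lam)).toReal := by
    rw [← ENNReal.toReal_add (measure_ne_top G _) (measure_ne_top G _),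
      ← measure_union hdisj measurableSet_Ioo, hsplit]
  -- linear function integrabilities
  have hid : ∀ s : Set ℝ, IntegrableOn (fun x => M - x) s G :=
    fun s => ((integrable_const M).sub hGint).restrict
  -- B split
  have hB : ∫ x in Iio lam, (M - x) ∂G
      = (∫ x in Iic q, (M - x) ∂G) + ∫ x in Ioo q lam, (M - x) ∂G := by
    rw [← hsplit, setIntegral_union hdisj measurableSet_Ioo (hid _) (hid _)]
  -- A in terms of B1
  have hA : ∫ x in Iic q, (q - x) ∂G
      = (∫ x in Iic q, (M - x) ∂G) + (G (Iic q)).toReal * (q - M) := by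
    have h1 : ∫ x in Iic q, (q - x) ∂G
        = ∫ x in Iic q, ((M - x) + (q - M)) ∂G := by
      refine setIntegral_congr_fun measurableSet_Iic ?_
      intro x _
      ring
    rw [h1, integral_add (hid _) (integrable_const _), setIntegral_const, measureReal_def, smul_eq_mul]
  -- value of nvCost difference
  have hVq := nvCost_F0 (b := b) (h := h) (lam := lam) (M := M) hGint q
  have hVM := nvCost_F0 (b := b) (h := h) (lam := lam) (M := M) hGint M
  have hcost : ∀ s : Set ℝ, ∀ y : ℝ,
      IntegrableOn (fun x => b * max (x - y) 0 + h * max (y - x) 0) s G :=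
    fun s y => (intg_cost b h G hGint y).restrict
  -- compute the first integral in hVq minus hVM
  have e0 : ∫ x in Iio lam, ((b * max (x - q) 0 + h * max (q - x) 0) - h * (M - x)) ∂G
      = (∫ x in Iio lam, (b * max (x - q) 0 + h * max (q - x) 0) ∂G)
        - h * ∫ x in Iio lam, (M - x) ∂G := by
    rw [integral_sub (hcost _ q) ((hid _).const_mul h), integral_const_mul]
  have e1 : ∫ x in Iio lam, ((b * max (x - q) 0 + h * max (q - x) 0) - h * (M - x)) ∂G
      = (∫ x in Iic q, ((b * max (x - q) 0 + h * max (q - x) 0) - h * (M - x)) ∂G)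
        + ∫ x in Ioo q lam, ((b * max (x - q) 0 + h * max (q - x) 0) - h * (M - x)) ∂G := by
    rw [← hsplit]
    exact setIntegral_union hdisj measurableSet_Ioo
      ((hcost (Iic q) q).sub ((hid (Iic q)).const_mul h))
      ((hcost (Ioo q lam) q).sub ((hid (Ioo q lam)).const_mul h))
  have e2 : ∫ x in Iic q, ((b * max (x - q) 0 + h * max (q - x) 0) - h * (M - x)) ∂G
      = (G (Iic q)).toReal * (h * (q - M)) := by
    have hpt : ∀ x ∈ Iic q, (b * max (x - q) 0 + h * max (q - x) 0) - h * (M - x)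
        = h * (q - M) := by
      intro x hx
      rw [mem_Iic] at hx
      rw [max_eq_right (by linarith), max_eq_left (by linarith)]
      ring
    rw [setIntegral_congr_fun measurableSet_Iic hpt, setIntegral_const, measureReal_def, smul_eq_mul]
  have e3 : ∫ x in Ioo q lam, ((b * max (x - q) 0 + h * max (q - x) 0) - h * (M - x)) ∂G
      = (G (Ioo q lam)).toReal * (b * (M - q)) - (b + h) * ∫ x in Ioo q lam, (M - x) ∂G := by
    have hpt : ∀ x ∈ Ioo q lam, (b * max (x - q) 0 + h * max (q - x) 0) - h * (M - x)
        = b * (M - q) - (b + h) * (M - x) := by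
      intro x hx
      obtain ⟨h1, _⟩ := hx
      rw [max_eq_left (by linarith), max_eq_right (by linarith)]
      ring
    rw [setIntegral_congr_fun measurableSet_Ioo hpt,
      integral_sub (integrableOn_const (C := b * (M - q)) (measure_lt_top G _).ne) ((hid _).const_mul (b+h)),
      setIntegral_const, measureReal_def, integral_const_mul, smul_eq_mul]
  have hIq : ∫ x in Iio lam, (b * max (x - q) 0 + h * max (q - x) 0) ∂G
      = (G (Iic q)).toReal * (h * (q - M))
        + ((G (Ioo q lam)).toReal * (b * (M - q)) - (b + h) * ∫ x in Ioo q lam, (M - x) ∂G)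
        + h * ∫ x in Iio lam, (M - x) ∂G := by
    rw [e2, e3] at e1
    linarith [e0, e1]
  have hIM : ∫ x in Iio lam, (b * max (x - M) 0 + h * max (M - x) 0) ∂G
      = h * ∫ x in Iio lam, (M - x) ∂G := by
    rw [← integral_const_mul]
    refine setIntegral_congr_fun measurableSet_Iio ?_
    intro x hx
    rw [mem_Iio] at hx
    show b * max (x - M) 0 + h * max (M - x) 0 = h * (M - x)
    rw [max_eq_right (by linarith), max_eq_left (by linarith)]
    ring
  rw [hVq, hVM, hIq, hIM]
  rw [max_eq_left (by linarith : (0:ℝ) ≤ M - q), max_eq_right (by linarith : q - M ≤ (0:ℝ)),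
    max_eq_right (by linarith : M - M ≤ (0:ℝ))]
  -- now pure algebra
  linear_combination (-(b+h)) * hA + (b+h) * hB + (b*(M-q)) * hm














-- new lemmas

lemma cdf_intOn' (F : Measure ℝ) [IsProbabilityMeasure F] {s : Set ℝ} (hs : volume s < ⊤) :
    IntegrableOn (fun t => (F (Iic t)).toReal) s volume := by
  have hmono : Monotone (fun t => (F (Iic t)).toReal) :=
    fun _ _ hst => toReal_mono' F (Iic_subset_Iic.2 hst)
  refine Integrable.mono' (g := fun _ => (1:ℝ)) (integrableOn_const hs.ne)
    (hmono.measurable.aestronglyMeasurable.restrict) ?_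
  filter_upwards with t
  rw [Real.norm_eq_abs, abs_of_nonneg ENNReal.toReal_nonneg]
  exact cdf_le_one F t


lemma nvCost_diff' (b h : ℝ) (F : Measure ℝ) [IsProbabilityMeasure F]
    (hF : Integrable id F) {a c : ℝ} (hac : a ≤ c) :
    nvCost b h F a - nvCost b h F c
      = ∫ t in Ioc a c, (b - (b + h) * (F (Iic t)).toReal) := by
  have h1 := nvCost_diff b h F hF hac
  have h2 : ∫ t in Ioc a c, (b - (b + h) * (F (Iic t)).toReal)
      = - ∫ t in Ioc a c, ((b + h) * (F (Iic t)).toReal - b) := by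
    rw [← integral_neg]
    refine integral_congr_ae (ae_of_all _ fun t => ?_)
    ring
  linarith






section Main

variable {b h M lam ρ : ℝ} {G : Measure ℝ} [IsProbabilityMeasure G]


lemma r_le_one (hρ1 : ρ < 1) (hrρ : (G (Iio lam)).toReal < ρ) :
    (0:ℝ) + (G (Iio lam)).toReal ≤ 1 := by
  have := hrρ.le.trans hρ1.le
  linarith


lemma qStar_F0 (hρ1 : ρ < 1) (hrρ : (G (Iio lam)).toReal < ρ) (hlamM : lam ≤ M) :
    qStar ρ (Fp G lam M 0) = M := by
  haveI := Fp_isProb (G := G) (lam := lam) (M := M) le_rfl (r_le_one hρ1 hrρ)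
  refine qStar_eq _ ?_ ?_
  · rw [Fp_Iic_ge le_rfl (r_le_one hρ1 hrρ) hlamM le_rfl]
    simpa using hρ1.le
  · intro t htM
    rcases lt_or_ge t lam with ht | ht
    · rw [Fp_Iic_lt hlamM ht]
      exact lt_of_le_of_lt (toReal_mono' G (fun x hx => lt_of_le_of_lt hx ht)) hrρ
    · rw [Fp_Iic_mid ht htM]
      simpa using hrρ


lemma mass1 (hρ1 : ρ < 1) (hrρ : (G (Iio lam)).toReal < ρ) :
    G (Iio lam) + ENNReal.ofReal (1 - (G (Iio lam)).toReal) = 1 := by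
  have h0 : (0:ℝ) ≤ 1 - (G (Iio lam)).toReal := by
    have := hrρ.le.trans hρ1.le; linarith
  have := Fp_mass (G := G) (lam := lam) (p := 1 - (G (Iio lam)).toReal) h0 (by linarith)
  have e : 1 - (1 - (G (Iio lam)).toReal) - (G (Iio lam)).toReal = 0 := by ring
  rwa [e, ENNReal.ofReal_zero, add_zero] at this


lemma qStar_F1 (hρ1 : ρ < 1) (hrρ : (G (Iio lam)).toReal < ρ) (hlamM : lam ≤ M) :
    qStar ρ (Fp G lam M (1 - (G (Iio lam)).toReal)) = lam := by
  have h0 : (0:ℝ) ≤ 1 - (G (Iio lam)).toReal := by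
    have := hrρ.le.trans hρ1.le; linarith
  haveI := Fp_isProb (G := G) (lam := lam) (M := M) h0 (by linarith)
  refine qStar_eq _ ?_ ?_
  · rcases lt_or_eq_of_le hlamM with hlt | heq
    · rw [Fp_Iic_mid le_rfl hlt, mass1 hρ1 hrρ]
      simpa using hρ1.le
    · rw [Fp_Iic_ge h0 (by linarith) hlamM heq.ge]
      simpa using hρ1.le
  · intro t ht
    rw [Fp_Iic_lt hlamM ht]
    exact lt_of_le_of_lt (toReal_mono' G (fun x hx => lt_of_le_of_lt hx ht)) hrρ

end Main
















section Main

variable {b h M lam ρ q : ℝ} {G : Measure ℝ} [IsProbabilityMeasure G]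


lemma dagger_id (hb : 0 < b) (hh : 0 < h) (hr1 : (G (Iio lam)).toReal < 1) (x : ℝ) :
    (b - (b + h) * (G (Iio lam)).toReal) * (M - x) - h * (x - lam)
      = ((b + h) * (1 - (G (Iio lam)).toReal)) * (qDagger b h M G lam - x) := by
  have hD : (b + h) * (1 - (G (Iio lam)).toReal) ≠ 0 := by
    have : 0 < (b + h) * (1 - (G (Iio lam)).toReal) := by nlinarith
    exact this.ne'
  have h1r : 1 - (G (Iio lam)).toReal ≠ 0 := (by linarith : (0:ℝ) < 1 - (G (Iio lam)).toReal).ne'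
  rw [qDagger]
  field_simp
  ring


lemma ub_ge (hb : 0 < b) (hh : 0 < h) (hρ1 : ρ < 1) (hρb : ρ * (b + h) = b)
    (hrρ : (G (Iio lam)).toReal < ρ) (hG0 : G (Iio 0) = 0) (hlam : 0 ≤ lam)
    (hlq : lam ≤ q) {F : Measure ℝ}
    (hFprob : IsProbabilityMeasure F) (hF0 : F (Iio 0) = 0) (hFint : Integrable id F)
    (hFq : qStar ρ F ≤ M) (hFag : ∀ x < lam, F (Iic x) = G (Iic x)) :
    nvCost b h F q - nvCost b h F (qStar ρ F)
      ≤ max (h * (q - lam)) ((b - (b + h) * (G (Iio lam)).toReal) * (M - q)) := by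
  haveI := hFprob
  have hbh : 0 < b + h := by linarith
  have hbr0 : 0 ≤ b - (b + h) * (G (Iio lam)).toReal := by nlinarith
  have hsge : lam ≤ qStar ρ F := by
    refine qStar_ge F hρ1 ?_
    intro t ht
    rw [hFag t ht]
    exact lt_of_le_of_lt (toReal_mono' G (fun x hx => lt_of_le_of_lt hx ht)) hrρ
  have hFlam : F (Iio lam) = G (Iio lam) := agree_Iio F G hlam hF0 hG0 hFag
  have hcdfge : ∀ t, lam ≤ t → (G (Iio lam)).toReal ≤ (F (Iic t)).toReal := by
    intro t ht
    rw [← hFlam]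
    exact toReal_mono' F (fun x hx => le_trans (le_of_lt hx) ht)
  rcases le_total (qStar ρ F) q with hsq | hqs
  · calc nvCost b h F q - nvCost b h F (qStar ρ F)
        = ∫ t in Ioc (qStar ρ F) q, ((b + h) * (F (Iic t)).toReal - b) :=
          nvCost_diff b h F hFint hsq
      _ ≤ ∫ _t in Ioc (qStar ρ F) q, (h : ℝ) := by
          refine setIntegral_mono_on
            (((cdf_intOn' F measure_Ioc_lt_top).const_mul _).sub
              (integrableOn_const measure_Ioc_lt_top.ne))
            (integrableOn_const measure_Ioc_lt_top.ne) measurableSet_Ioc ?_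
          intro t _
          have h1 := cdf_le_one F t
          nlinarith [mul_le_mul_of_nonneg_left h1 hbh.le]
      _ = h * (q - qStar ρ F) := by
          rw [setIntegral_const, measureReal_def, Real.volume_Ioc, ENNReal.toReal_ofReal (by linarith),
            smul_eq_mul, mul_comm]
      _ ≤ h * (q - lam) := by nlinarith
      _ ≤ _ := le_max_left _ _
  · calc nvCost b h F q - nvCost b h F (qStar ρ F)
        = ∫ t in Ioc q (qStar ρ F), (b - (b + h) * (F (Iic t)).toReal) :=
          nvCost_diff' b h F hFint hqs
      _ ≤ ∫ _t in Ioc q (qStar ρ F), (b - (b + h) * (G (Iio lam)).toReal) := by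
          refine setIntegral_mono_on
            ((integrableOn_const measure_Ioc_lt_top.ne).sub
              ((cdf_intOn' F measure_Ioc_lt_top).const_mul _))
            (integrableOn_const measure_Ioc_lt_top.ne) measurableSet_Ioc ?_
          intro t ht
          have h1 := hcdfge t (le_trans hlq ht.1.le)
          nlinarith [mul_le_mul_of_nonneg_left h1 hbh.le]
      _ = (b - (b + h) * (G (Iio lam)).toReal) * (qStar ρ F - q) := by
          rw [setIntegral_const, measureReal_def, Real.volume_Ioc, ENNReal.toReal_ofReal (by linarith),
            smul_eq_mul, mul_comm]
      _ ≤ (b - (b + h) * (G (Iio lam)).toReal) * (M - q) := by nlinarith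
      _ ≤ _ := le_max_right _ _


lemma ub_lt (hb : 0 < b) (hh : 0 < h) (hρ1 : ρ < 1) (hρb : ρ * (b + h) = b)
    (hrρ : (G (Iio lam)).toReal < ρ) (hG0 : G (Iio 0) = 0) (hlam : 0 ≤ lam)
    (hql : q < lam) (hlamM : lam ≤ M) {F : Measure ℝ}
    (hFprob : IsProbabilityMeasure F) (hF0 : F (Iio 0) = 0) (hFint : Integrable id F)
    (hFq : qStar ρ F ≤ M) (hFag : ∀ x < lam, F (Iic x) = G (Iic x)) :
    nvCost b h F q - nvCost b h F (qStar ρ F)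
      ≤ ∫ t in Ioc q M, (b - (b + h) * ((Fp G lam M 0) (Iic t)).toReal) := by
  haveI := hFprob
  haveI : IsProbabilityMeasure (Fp G lam M 0) := Fp_isProb le_rfl (r_le_one hρ1 hrρ)
  have hbh : 0 < b + h := by linarith
  have hsge : lam ≤ qStar ρ F := by
    refine qStar_ge F hρ1 ?_
    intro t ht
    rw [hFag t ht]
    exact lt_of_le_of_lt (toReal_mono' G (fun x hx => lt_of_le_of_lt hx ht)) hrρ
  have hFlam : F (Iio lam) = G (Iio lam) := agree_Iio F G hlam hF0 hG0 hFag
  have hcdfge : ∀ t, lam ≤ t → (G (Iio lam)).toReal ≤ (F (Iic t)).toReal := by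
    intro t ht
    rw [← hFlam]
    exact toReal_mono' F (fun x hx => le_trans (le_of_lt hx) ht)
  have hqs : q ≤ qStar ρ F := le_trans hql.le hsge
  calc nvCost b h F q - nvCost b h F (qStar ρ F)
      = ∫ t in Ioc q (qStar ρ F), (b - (b + h) * (F (Iic t)).toReal) :=
        nvCost_diff' b h F hFint hqs
    _ = ∫ t in Ioo q (qStar ρ F), (b - (b + h) * (F (Iic t)).toReal) :=
        (setIntegral_congr_set Ioo_ae_eq_Ioc).symm
    _ ≤ ∫ t in Ioo q (qStar ρ F), (b - (b + h) * ((Fp G lam M 0) (Iic t)).toReal) := by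
        refine setIntegral_mono_on
          ((integrableOn_const measure_Ioo_lt_top.ne).sub
            ((cdf_intOn' F measure_Ioo_lt_top).const_mul _))
          ((integrableOn_const measure_Ioo_lt_top.ne).sub
            ((cdf_intOn' (Fp G lam M 0) measure_Ioo_lt_top).const_mul _))
          measurableSet_Ioo ?_
        intro t ht
        have htM : t < M := lt_of_lt_of_le ht.2 hFq
        rcases lt_or_ge t lam with h1 | h1
        · have : F (Iic t) = Fp G lam M 0 (Iic t) := by
            rw [hFag t h1, Fp_Iic_lt hlamM h1]
          rw [this]
        · have h2 : ((Fp G lam M 0) (Iic t)).toReal = (G (Iio lam)).toReal := by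
            rw [Fp_Iic_mid h1 htM]
            simp
          rw [h2]
          have h3 := hcdfge t h1
          nlinarith [mul_le_mul_of_nonneg_left h3 hbh.le]
    _ ≤ ∫ t in Ioo q M, (b - (b + h) * ((Fp G lam M 0) (Iic t)).toReal) := by
        refine setIntegral_mono_set
          ((integrableOn_const measure_Ioo_lt_top.ne).sub
            ((cdf_intOn' (Fp G lam M 0) measure_Ioo_lt_top).const_mul _))
          ?_ (HasSubset.Subset.eventuallyLE (Ioo_subset_Ioo_right hFq))
        refine (ae_restrict_iff' measurableSet_Ioo).2 (ae_of_all _ ?_)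
        intro t ht
        have hle : ((Fp G lam M 0) (Iic t)).toReal ≤ (G (Iio lam)).toReal := by
          rcases lt_or_ge t lam with h1 | h1
          · rw [Fp_Iic_lt hlamM h1]
            exact toReal_mono' G (fun x hx => lt_of_le_of_lt hx h1)
          · rw [Fp_Iic_mid h1 ht.2]
            simp
        show (0:ℝ) ≤ b - (b + h) * ((Fp G lam M 0) (Iic t)).toReal
        nlinarith [mul_le_mul_of_nonneg_left hle hbh.le,
          mul_le_mul_of_nonneg_left hrρ.le hbh.le]
    _ = ∫ t in Ioc q M, (b - (b + h) * ((Fp G lam M 0) (Iic t)).toReal) :=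
        setIntegral_congr_set Ioo_ae_eq_Ioc


lemma W2 (hb : 0 < b) (hh : 0 < h) (hρ1 : ρ < 1)
    (hrρ : (G (Iio lam)).toReal < ρ) (hGint : Integrable id G)
    (hlq : lam ≤ q) (hqM : q ≤ M) :
    nvCost b h (Fp G lam M 0) q - nvCost b h (Fp G lam M 0) M
      = (b - (b + h) * (G (Iio lam)).toReal) * (M - q) := by
  haveI : IsProbabilityMeasure (Fp G lam M 0) := Fp_isProb le_rfl (r_le_one hρ1 hrρ)
  rw [nvCost_diff' b h _ (Fp_integrable hGint) hqM,
    ← setIntegral_congr_set Ioo_ae_eq_Ioc]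
  have hcg : ∀ t ∈ Ioo q M, (b - (b + h) * ((Fp G lam M 0) (Iic t)).toReal)
      = b - (b + h) * (G (Iio lam)).toReal := by
    intro t ht
    rw [Fp_Iic_mid (le_trans hlq ht.1.le) ht.2]
    simp
  rw [setIntegral_congr_fun measurableSet_Ioo hcg, setIntegral_const, measureReal_def, Real.volume_Ioo,
    ENNReal.toReal_ofReal (by linarith), smul_eq_mul, mul_comm]


lemma W3 (hb : 0 < b) (hh : 0 < h) (hρ1 : ρ < 1)
    (hrρ : (G (Iio lam)).toReal < ρ) (hGint : Integrable id G)
    (hlamM : lam ≤ M) (hlq : lam ≤ q) (hqM : q ≤ M) :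
    nvCost b h (Fp G lam M (1 - (G (Iio lam)).toReal)) q
      - nvCost b h (Fp G lam M (1 - (G (Iio lam)).toReal)) lam = h * (q - lam) := by
  have h0 : (0:ℝ) ≤ 1 - (G (Iio lam)).toReal := by
    have := hrρ.le.trans hρ1.le
    linarith
  haveI : IsProbabilityMeasure (Fp G lam M (1 - (G (Iio lam)).toReal)) :=
    Fp_isProb h0 (by linarith)
  rw [nvCost_diff b h _ (Fp_integrable hGint) hlq]
  have hcg : ∀ t ∈ Ioc lam q,
      ((b + h) * ((Fp G lam M (1 - (G (Iio lam)).toReal)) (Iic t)).toReal - b) = h := by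
    intro t ht
    have h1 : ((Fp G lam M (1 - (G (Iio lam)).toReal)) (Iic t)).toReal = 1 := by
      rcases lt_or_ge t M with h2 | h2
      · rw [Fp_Iic_mid ht.1.le h2, mass1 hρ1 hrρ]
        simp
      · rw [Fp_Iic_ge h0 (by linarith) hlamM h2]
        simp
    rw [h1]
    ring
  rw [setIntegral_congr_fun measurableSet_Ioc hcg, setIntegral_const, measureReal_def, Real.volume_Ioc,
    ENNReal.toReal_ofReal (by linarith), smul_eq_mul, mul_comm]

end Main

end NV5

/-- closed form for the worst-case regret in the unidentifiable
regime `G⁻(λ) < ρ`. -/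
theorem stmt5 (b h M lam ρ : ℝ) (hb : 0 < b) (hh : 0 < h) (hM : 0 < M)
    (hlam : 0 ≤ lam) (hρ : ρ = b / (b + h))
    (G : Measure ℝ) (hG : G ∈ GoodDist ρ M)
    (hcen : (G (Iio lam)).toReal < ρ)
    (q : ℝ) (hq : q ∈ Icc (0 : ℝ) M) :
    (q < lam →
      Regret b h ρ M G lam q =
        b * (M - q) + (b + h) *
          ((∫ x in Iic q, (q - x) ∂G) - ∫ x in Iio lam, (M - x) ∂G)) ∧
    (lam ≤ q → q ≤ qDagger b h M G lam →
      Regret b h ρ M G lam q = (b - (b + h) * (G (Iio lam)).toReal) * (M - q)) ∧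
    (qDagger b h M G lam < q →
      Regret b h ρ M G lam q = h * (q - lam)) := by
  obtain ⟨hGprob, hG0, hGint, hGq⟩ := hG
  haveI := hGprob
  have hbh : 0 < b + h := by linarith
  have hρ0 : 0 < ρ := by rw [hρ]; positivity
  have hρ1 : ρ < 1 := by rw [hρ, div_lt_one hbh]; linarith
  have hρb : ρ * (b + h) = b := by rw [hρ]; field_simp
  have hrρ : (G (Iio lam)).toReal < ρ := hcen
  have hr0 : (0:ℝ) ≤ (G (Iio lam)).toReal := ENNReal.toReal_nonneg
  have hr1 : (G (Iio lam)).toReal < 1 := lt_trans hrρ hρ1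
  have hbr0 : 0 < b - (b + h) * (G (Iio lam)).toReal := by nlinarith
  have hD : 0 < (b + h) * (1 - (G (Iio lam)).toReal) := by nlinarith
  have hlamM : lam ≤ M := by
    by_contra hc
    push_neg at hc
    obtain ⟨s, hs1, hs2⟩ := NV5.exists_lt_of_qStar_lt G hρ0 hρ1 hG0 (lt_of_le_of_lt hGq hc)
    have hle : (G (Iic s)).toReal ≤ (G (Iio lam)).toReal :=
      NV5.toReal_mono' G (fun x hx => lt_of_le_of_lt hx hs1)
    linarith
  have hdag := NV5.dagger_id (M := M) hb hh hr1
  haveI hP0 : IsProbabilityMeasure (Fp G lam M 0) :=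
    NV5.Fp_isProb le_rfl (NV5.r_le_one hρ1 hrρ)
  have hmem0 : Fp G lam M 0 ∈ Ambig ρ M G lam := by
    refine ⟨⟨hP0, NV5.Fp_Iio_zero hG0 hlam hM, NV5.Fp_integrable hGint, ?_⟩,
      fun x hx => NV5.Fp_Iic_lt hlamM hx⟩
    rw [NV5.qStar_F0 hρ1 hrρ hlamM]
  have h0' : (0:ℝ) ≤ 1 - (G (Iio lam)).toReal := by linarith
  haveI hP1 : IsProbabilityMeasure (Fp G lam M (1 - (G (Iio lam)).toReal)) :=
    NV5.Fp_isProb h0' (by linarith)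
  have hmem1 : Fp G lam M (1 - (G (Iio lam)).toReal) ∈ Ambig ρ M G lam := by
    refine ⟨⟨hP1, NV5.Fp_Iio_zero hG0 hlam hM, NV5.Fp_integrable hGint, ?_⟩,
      fun x hx => NV5.Fp_Iic_lt hlamM hx⟩
    rw [NV5.qStar_F1 hρ1 hrρ hlamM]
    exact hlamM
  refine ⟨?_, ?_, ?_⟩
  · -- branch 1 : q < lam
    intro hql
    show sSup ((fun F => nvCost b h F q - nvCost b h F (qStar ρ F)) '' Ambig ρ M G lam) = _
    refine IsGreatest.csSup_eq ⟨⟨Fp G lam M 0, hmem0, ?_⟩, ?_⟩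
    · show nvCost b h (Fp G lam M 0) q - nvCost b h (Fp G lam M 0) (qStar ρ (Fp G lam M 0)) = _
      rw [NV5.qStar_F0 hρ1 hrρ hlamM]
      exact NV5.F0_value hGint hb hh hql hlamM hq.2
    · rintro v ⟨F, hF, rfl⟩
      obtain ⟨⟨hFprob, hF0, hFint, hFq⟩, hFag⟩ := hF
      show nvCost b h F q - nvCost b h F (qStar ρ F) ≤ _
      calc nvCost b h F q - nvCost b h F (qStar ρ F)
          ≤ ∫ t in Ioc q M, (b - (b + h) * ((Fp G lam M 0) (Iic t)).toReal) :=
            NV5.ub_lt hb hh hρ1 hρb hrρ hG0 hlam hql hlamM hFprob hF0 hFint hFq hFag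
        _ = nvCost b h (Fp G lam M 0) q - nvCost b h (Fp G lam M 0) M :=
            (NV5.nvCost_diff' b h _ (NV5.Fp_integrable hGint) hq.2).symm
        _ = _ := NV5.F0_value hGint hb hh hql hlamM hq.2
  · -- branch 2 : lam ≤ q ≤ qDagger
    intro hlq hqd
    show sSup ((fun F => nvCost b h F q - nvCost b h F (qStar ρ F)) '' Ambig ρ M G lam) = _
    refine IsGreatest.csSup_eq ⟨⟨Fp G lam M 0, hmem0, ?_⟩, ?_⟩
    · show nvCost b h (Fp G lam M 0) q - nvCost b h (Fp G lam M 0) (qStar ρ (Fp G lam M 0)) = _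
      rw [NV5.qStar_F0 hρ1 hrρ hlamM]
      exact NV5.W2 hb hh hρ1 hrρ hGint hlq hq.2
    · rintro v ⟨F, hF, rfl⟩
      obtain ⟨⟨hFprob, hF0, hFint, hFq⟩, hFag⟩ := hF
      show nvCost b h F q - nvCost b h F (qStar ρ F) ≤ _
      refine le_trans
        (NV5.ub_ge hb hh hρ1 hρb hrρ hG0 hlam hlq hFprob hF0 hFint hFq hFag)
        (max_le ?_ le_rfl)
      have h1 : 0 ≤ ((b + h) * (1 - (G (Iio lam)).toReal)) * (qDagger b h M G lam - q) :=
        mul_nonneg hD.le (by linarith)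
      linarith [hdag q]
  · -- branch 3 : qDagger < q
    intro hqd
    have hdl : lam ≤ qDagger b h M G lam := by
      by_contra hcq
      push_neg at hcq
      have h1 : 0 ≤ (b - (b + h) * (G (Iio lam)).toReal) * (M - lam) - h * (lam - lam) := by
        have := mul_nonneg hbr0.le (show (0:ℝ) ≤ M - lam by linarith)
        simpa using this
      have h2 := hdag lam
      have h3 : ((b + h) * (1 - (G (Iio lam)).toReal)) * (qDagger b h M G lam - lam) < 0 :=
        mul_neg_of_pos_of_neg hD (by linarith)
      linarith
    have hlq : lam ≤ q := le_trans hdl hqd.le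
    show sSup ((fun F => nvCost b h F q - nvCost b h F (qStar ρ F)) '' Ambig ρ M G lam) = _
    refine IsGreatest.csSup_eq ⟨⟨Fp G lam M (1 - (G (Iio lam)).toReal), hmem1, ?_⟩, ?_⟩
    · show nvCost b h (Fp G lam M (1 - (G (Iio lam)).toReal)) q
        - nvCost b h (Fp G lam M (1 - (G (Iio lam)).toReal))
          (qStar ρ (Fp G lam M (1 - (G (Iio lam)).toReal))) = _
      rw [NV5.qStar_F1 hρ1 hrρ hlamM]
      exact NV5.W3 hb hh hρ1 hrρ hGint hlamM hlq hq.2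
    · rintro v ⟨F, hF, rfl⟩
      obtain ⟨⟨hFprob, hF0, hFint, hFq⟩, hFag⟩ := hF
      show nvCost b h F q - nvCost b h F (qStar ρ F) ≤ _
      refine le_trans
        (NV5.ub_ge hb hh hρ1 hρb hrρ hG0 hlam hlq hFprob hF0 hFint hFq hFag)
        (max_le le_rfl ?_)
      have h1 : ((b + h) * (1 - (G (Iio lam)).toReal)) * (qDagger b h M G lam - q) ≤ 0 :=
        mul_nonpos_of_nonneg_of_nonpos hD.le (by linarith)
      linarith [hdag q]
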